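/- If for some fixed j the operator X_j is a linear combination X_j = a_1 X_1 + ... + a_{j-1} X_{j-1} of the operators X_1, ..., X_{j-1}, then every operator X_k for k ≥ j is a linear combination of X_1, ..., X_{j-1}; in particular X_{j+1} = D^{-1}(a_1) X_1 + ... + D^{-1}(a_{j-1}) X_j, using the conjugation relation X_{k+1} = \bar{D}^{-1} X_k \bar{D}. -/

import Mathlib

/-- If `X_j = a₁X₁ + ⋯ + a_{j-1}X_{j-1}`, then every `X_k` with `k ≥ j` is a
linear combination of `X₁, …, X_{j-1}`; in particular
`X_{j+1} = D⁻¹(a₁)X₂ + ⋯ + D⁻¹(a_{j-1})X_j`, using `X_{k+1} = D̄⁻¹ X_k D̄`,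
where conjugation by `D̄` acts on coefficients through the ring morphism `σ`. -/
theorem stmt2 {R V : Type*} [CommRing R] [AddCommGroup V] [Module R V]
    (σ : R →+* R)                       -- action of the inverse shift on coefficients
    (T : V → V)                         -- conjugation `X ↦ D̄⁻¹ X D̄`
    (hTadd : ∀ x y : V, T (x + y) = T x + T y)
    (hTsmul : ∀ (a : R) (x : V), T (a • x) = σ a • T x)
    (X : ℕ → V)
    (hX : ∀ k, X (k+1) = T (X k))
    (j : ℕ) (hj : 2 ≤ j)
    (a : ℕ → R)
    (hcomb : X j = ∑ i ∈ Finset.Ico 1 j, a i • X i) :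
    (X (j+1) = ∑ i ∈ Finset.Ico 1 j, σ (a i) • X (i+1)) ∧
    (∀ k, j ≤ k → ∃ b : ℕ → R, X k = ∑ i ∈ Finset.Ico 1 j, b i • X i) := by
  classical
  have hT0 : T 0 = 0 := by
    have h := hTadd 0 0
    rw [add_zero] at h
    exact (left_eq_add.mp h)
  have Tsum : ∀ (s : Finset ℕ) (f : ℕ → V),
      T (∑ i ∈ s, f i) = ∑ i ∈ s, T (f i) := by
    intro s f
    induction s using Finset.induction with
    | empty => simpa using hT0
    | insert _ _ h ih => rw [Finset.sum_insert h, hTadd, ih, Finset.sum_insert h]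
  -- one-step lemma
  have h1 : ∀ (b : ℕ → R) (k : ℕ), X k = ∑ i ∈ Finset.Ico 1 j, b i • X i →
      X (k+1) = ∑ i ∈ Finset.Ico 1 j, σ (b i) • X (i+1) := by
    intro b k hk
    rw [hX, hk, Tsum]
    exact Finset.sum_congr rfl fun i _ => by rw [hTsmul, hX]
  refine ⟨h1 a j hcomb, ?_⟩
  intro k hk
  induction k, hk using Nat.le_induction with
  | base => exact ⟨a, hcomb⟩
  | succ n hn ih =>
    obtain ⟨b, hb⟩ := ih
    refine ⟨fun i => (if i = 1 then 0 else σ (b (i-1))) + σ (b (j-1)) * a i, ?_⟩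
    rw [h1 b n hb]
    have hj1 : 1 ≤ j - 1 := by omega
    have hjj : j - 1 + 1 = j := by omega
    -- RHS computation
    have hrhs : ∑ i ∈ Finset.Ico 1 j,
        ((if i = 1 then 0 else σ (b (i-1))) + σ (b (j-1)) * a i) • X i
        = (∑ i ∈ Finset.Ico 2 j, σ (b (i-1)) • X i) + σ (b (j-1)) • X j := by
      rw [hcomb, Finset.smul_sum]
      have hsplit : ∀ i ∈ Finset.Ico 1 j,
          ((if i = 1 then 0 else σ (b (i-1))) + σ (b (j-1)) * a i) • X i
          = (if i = 1 then 0 else σ (b (i-1)) • X i) + σ (b (j-1)) • a i • X i := by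
        intro i _
        rw [add_smul, mul_smul]
        congr 1
        split <;> simp
      rw [Finset.sum_congr rfl hsplit, Finset.sum_add_distrib]
      congr 1
      have hins : Finset.Ico 1 j = insert 1 (Finset.Ico 2 j) := by
        ext x
        simp only [Finset.mem_Ico, Finset.mem_insert]
        omega
      rw [hins, Finset.sum_insert (by simp), if_pos rfl, zero_add]
      apply Finset.sum_congr rfl
      intro i hi
      rw [if_neg]
      have := Finset.mem_Ico.mp hi
      omega
    rw [hrhs]
    -- LHS computation: split top term and reindex
    rw [← hjj, Finset.sum_Ico_succ_top hj1, hjj]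
    congr 1
    · rw [Finset.sum_Ico_eq_sum_range, Finset.sum_Ico_eq_sum_range]
      have h2 : j - 1 - 1 = j - 2 := by omega
      rw [h2]
      apply Finset.sum_congr rfl
      intro i _
      have e1 : 1 + i = 2 + i - 1 := by omega
      have e2 : 1 + i + 1 = 2 + i := by omega
      rw [e1]
      have e3 : 2 + i - 1 + 1 = 2 + i := by omega
      rw [e3]
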